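/- Let (Ω, μ) be a measure space with μ(Ω) < ∞, let D, R₀, R₅ > 0, and let χ ∈ (0,1]. Let Λ_φ, Λ_S, Θ_S, Θ_φ : ℝ² → ℝ be Borel measurable functions satisfying |Λ_φ(a,b)| ≤ R₀(1+|a|+|b|), |Λ_S(a,b)| ≤ R₀(1+|a|+|b|), |Θ_S(a,b)| ≤ R₀, and R₅ ≤ Θ_φ(a,b) ≤ R₀ for all (a,b) ∈ ℝ². Then there exists a constant C > 0 depending only on R₀, R₅, D and μ(Ω) such that for all square-integrable φ, σ, w : Ω → ℝ, setting Γ_φ = Λ_φ(φ,σ) − Θ_φ(φ,σ) w and S = Λ_S(φ,σ) − Θ_S(φ,σ) w pointwise, one has ∫_Ω (Γ_φ w − S (Dσ + χ(1−φ))) dμ ≤ −(R₅/2) ∫_Ω w² dμ + C (1+χ²) (1 + ∫_Ω φ² dμ + ∫_Ω σ² dμ). -/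

import Mathlib

open MeasureTheory
open MeasureTheory

lemma my_mul_int {Ω : Type*} [MeasurableSpace Ω] {μ : Measure Ω} {f g : Ω → ℝ}
    (hf : MemLp f 2 μ) (hg : MemLp g 2 μ) : Integrable (fun x => f x * g x) μ := by
  have h : MemLp (f • g) 1 μ := hg.smul hf
  exact memLp_one_iff_integrable.mp h

lemma my_young (ε a b : ℝ) (hε : 0 < ε) : a * b ≤ ε * a ^ 2 + b ^ 2 / (4 * ε) := by
  have h4 : (0:ℝ) < 4 * ε := by linarith
  have hX : (a * b - ε * a ^ 2) * (4 * ε) ≤ b ^ 2 := by nlinarith [sq_nonneg (2 * ε * a - b)]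
  have := (le_div_iff₀ h4).mpr hX
  linarith

lemma my_core (R₀ R₅ M B lφ lS tS tφ v : ℝ) (hR₀ : 0 < R₀) (hR₅ : 0 < R₅)
    (hM0 : 0 ≤ M) (h1 : |lφ| ≤ R₀ * M) (h2 : |lS| ≤ R₀ * M) (h3 : |tS| ≤ R₀)
    (h4 : R₅ ≤ tφ) :
    (lφ - tφ * v) * v - (lS - tS * v) * B ≤
      -(R₅ / 2) * v ^ 2 + (R₀ ^ 2 / R₅ + R₀ ^ 2 / 2) * M ^ 2 + (R₀ ^ 2 / R₅ + 1 / 2) * B ^ 2 := by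
  have hT4 : R₅ * v ^ 2 ≤ tφ * v ^ 2 := mul_le_mul_of_nonneg_right h4 (sq_nonneg v)
  have hT1 : lφ * v ≤ R₅ / 4 * v ^ 2 + R₀ ^ 2 / R₅ * M ^ 2 := by
    have e1 : lφ * v ≤ |v| * (R₀ * M) := by
      calc lφ * v ≤ |lφ * v| := le_abs_self _
        _ = |v| * |lφ| := by rw [abs_mul]; ring
        _ ≤ |v| * (R₀ * M) := mul_le_mul_of_nonneg_left h1 (abs_nonneg v)
    have e2 := my_young (R₅ / 4) |v| (R₀ * M) (by linarith)
    have e3 : (R₀ * M) ^ 2 / (4 * (R₅ / 4)) = R₀ ^ 2 / R₅ * M ^ 2 := by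
      field_simp
    have e4 : |v| ^ 2 = v ^ 2 := sq_abs v
    rw [e3, e4] at e2
    linarith
  have hT2 : tS * v * B ≤ R₅ / 4 * v ^ 2 + R₀ ^ 2 / R₅ * B ^ 2 := by
    have e1 : tS * v * B ≤ |v| * (R₀ * |B|) := by
      calc tS * v * B ≤ |tS * v * B| := le_abs_self _
        _ = |v| * (|tS| * |B|) := by rw [abs_mul, abs_mul]; ring
        _ ≤ |v| * (R₀ * |B|) := by
            exact mul_le_mul_of_nonneg_left
              (mul_le_mul_of_nonneg_right h3 (abs_nonneg B)) (abs_nonneg v)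
    have e2 := my_young (R₅ / 4) |v| (R₀ * |B|) (by linarith)
    have e3 : (R₀ * |B|) ^ 2 / (4 * (R₅ / 4)) = R₀ ^ 2 / R₅ * B ^ 2 := by
      rw [mul_pow, sq_abs]; field_simp
    have e4 : |v| ^ 2 = v ^ 2 := sq_abs v
    rw [e3, e4] at e2
    linarith
  have hT3 : -(lS * B) ≤ R₀ ^ 2 / 2 * M ^ 2 + 1 / 2 * B ^ 2 := by
    have e1 : -(lS * B) ≤ (R₀ * M) * |B| := by
      calc -(lS * B) ≤ |lS * B| := neg_le_abs _
        _ = |lS| * |B| := abs_mul _ _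
        _ ≤ (R₀ * M) * |B| := mul_le_mul_of_nonneg_right h2 (abs_nonneg B)
    nlinarith [sq_nonneg (R₀ * M - |B|), sq_abs B]
  nlinarith [hT1, hT2, hT3, hT4]

lemma my_pointwise (R₀ R₅ D χ lφ lS tS tφ p s v : ℝ)
    (hR₀ : 0 < R₀) (hR₅ : 0 < R₅) (hχ0 : 0 < χ) (hχ1 : χ ≤ 1)
    (h1 : |lφ| ≤ R₀ * (1 + |p| + |s|)) (h2 : |lS| ≤ R₀ * (1 + |p| + |s|))
    (h3 : |tS| ≤ R₀) (h4 : R₅ ≤ tφ) :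
    (lφ - tφ * v) * v - (lS - tS * v) * (D * s + χ * (1 - p)) ≤
      -(R₅ / 2) * v ^ 2 +
      (3 * (R₀ ^ 2 / R₅ + R₀ ^ 2 / 2) + 4 * (D ^ 2 + 1) * (R₀ ^ 2 / R₅ + 1 / 2)) *
        (1 + p ^ 2 + s ^ 2) := by
  have key := my_core R₀ R₅ (1 + |p| + |s|) (D * s + χ * (1 - p)) lφ lS tS tφ v
    hR₀ hR₅ (by positivity) h1 h2 h3 h4
  have hχsq : χ ^ 2 ≤ 1 := by nlinarith
  have hMsq : (1 + |p| + |s|) ^ 2 ≤ 3 * (1 + p ^ 2 + s ^ 2) := by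
    nlinarith [sq_nonneg (|p| - |s|), sq_nonneg (|p| - 1), sq_nonneg (|s| - 1),
      sq_abs p, sq_abs s]
  have hBsq : (D * s + χ * (1 - p)) ^ 2 ≤ 4 * (D ^ 2 + 1) * (1 + p ^ 2 + s ^ 2) := by
    nlinarith [sq_nonneg (D * s - χ * (1 - p)),
      mul_le_mul_of_nonneg_right hχsq (sq_nonneg (1 - p)), sq_nonneg (1 + p),
      sq_nonneg (D * s), sq_nonneg s, sq_nonneg p]
  have hc1 : (0:ℝ) ≤ R₀ ^ 2 / R₅ + R₀ ^ 2 / 2 := by positivity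
  have hc2 : (0:ℝ) ≤ R₀ ^ 2 / R₅ + 1 / 2 := by positivity
  have e1 := mul_le_mul_of_nonneg_left hMsq hc1
  have e2 := mul_le_mul_of_nonneg_left hBsq hc2
  calc (lφ - tφ * v) * v - (lS - tS * v) * (D * s + χ * (1 - p)) ≤
      -(R₅ / 2) * v ^ 2 + (R₀ ^ 2 / R₅ + R₀ ^ 2 / 2) * (1 + |p| + |s|) ^ 2 +
        (R₀ ^ 2 / R₅ + 1 / 2) * (D * s + χ * (1 - p)) ^ 2 := key
    _ ≤ -(R₅ / 2) * v ^ 2 + (R₀ ^ 2 / R₅ + R₀ ^ 2 / 2) * (3 * (1 + p ^ 2 + s ^ 2)) +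
        (R₀ ^ 2 / R₅ + 1 / 2) * (4 * (D ^ 2 + 1) * (1 + p ^ 2 + s ^ 2)) := by linarith
    _ = -(R₅ / 2) * v ^ 2 +
        (3 * (R₀ ^ 2 / R₅ + R₀ ^ 2 / 2) + 4 * (D ^ 2 + 1) * (R₀ ^ 2 / R₅ + 1 / 2)) *
          (1 + p ^ 2 + s ^ 2) := by ring


/-- When `Θφ` is bounded below by a positive constant `R₅`, the quadratic term
`Θφ w²` in the energy identity absorbs the remaining source contributions up to
lower-order `L²` terms. -/
theorem source_term_absorption
    {Ω : Type*} [MeasurableSpace Ω] (μ : Measure Ω) [IsFiniteMeasure μ]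
    (D R₀ R₅ : ℝ) (hD : 0 < D) (hR₀ : 0 < R₀) (hR₅ : 0 < R₅)
    (χ : ℝ) (hχ0 : 0 < χ) (hχ1 : χ ≤ 1)
    (Λφ ΛS ΘS Θφ : ℝ × ℝ → ℝ)
    (hΛφm : Measurable Λφ) (hΛSm : Measurable ΛS)
    (hΘSm : Measurable ΘS) (hΘφm : Measurable Θφ)
    (hΛφ : ∀ a b : ℝ, |Λφ (a, b)| ≤ R₀ * (1 + |a| + |b|))
    (hΛS : ∀ a b : ℝ, |ΛS (a, b)| ≤ R₀ * (1 + |a| + |b|))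
    (hΘS : ∀ a b : ℝ, |ΘS (a, b)| ≤ R₀)
    (hΘφ : ∀ a b : ℝ, R₅ ≤ Θφ (a, b) ∧ Θφ (a, b) ≤ R₀) :
    ∃ C : ℝ, 0 < C ∧
      ∀ φ σ w : Ω → ℝ, MemLp φ 2 μ → MemLp σ 2 μ → MemLp w 2 μ →
        ∫ x, ((Λφ (φ x, σ x) - Θφ (φ x, σ x) * w x) * w x -
              (ΛS (φ x, σ x) - ΘS (φ x, σ x) * w x) *
                (D * σ x + χ * (1 - φ x))) ∂μ ≤
          -(R₅ / 2) * ∫ x, (w x) ^ 2 ∂μ +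
          C * (1 + χ ^ 2) * (1 + (∫ x, (φ x) ^ 2 ∂μ) + ∫ x, (σ x) ^ 2 ∂μ) := by
  set K₀ : ℝ := 3 * (R₀ ^ 2 / R₅ + R₀ ^ 2 / 2) + 4 * (D ^ 2 + 1) * (R₀ ^ 2 / R₅ + 1 / 2)
    with hK₀def
  have hK₀ : 0 < K₀ := by positivity
  set m : ℝ := (μ Set.univ).toReal with hmdef
  have hm : 0 ≤ m := ENNReal.toReal_nonneg
  refine ⟨K₀ * (1 + m), by positivity, ?_⟩
  intro φ σ w hφ hσ hw
  -- measurability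
  have haem : AEMeasurable (fun x => (φ x, σ x)) μ :=
    (hφ.aestronglyMeasurable.aemeasurable).prodMk (hσ.aestronglyMeasurable.aemeasurable)
  have hf1m : AEStronglyMeasurable (fun x => Λφ (φ x, σ x)) μ :=
    (hΛφm.comp_aemeasurable haem).aestronglyMeasurable
  have hf2m : AEStronglyMeasurable (fun x => ΛS (φ x, σ x)) μ :=
    (hΛSm.comp_aemeasurable haem).aestronglyMeasurable
  have hf3m : AEStronglyMeasurable (fun x => ΘS (φ x, σ x)) μ :=
    (hΘSm.comp_aemeasurable haem).aestronglyMeasurable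
  have hf4m : AEStronglyMeasurable (fun x => Θφ (φ x, σ x)) μ :=
    (hΘφm.comp_aemeasurable haem).aestronglyMeasurable
  -- the dominating L² function
  have hg : MemLp (fun x => R₀ * (1 + |φ x| + |σ x|)) 2 μ := by
    have h := (((memLp_const (1:ℝ)).add hφ.abs).add hσ.abs).const_mul R₀
    simpa using h
  have hgnn : ∀ x : Ω, 0 ≤ R₀ * (1 + |φ x| + |σ x|) := fun x => by positivity
  -- MemLp facts
  have hf1 : MemLp (fun x => Λφ (φ x, σ x)) 2 μ := by
    refine hg.of_le hf1m (ae_of_all _ fun x => ?_)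
    rw [Real.norm_eq_abs, Real.norm_eq_abs, abs_of_nonneg (hgnn x)]
    exact hΛφ (φ x) (σ x)
  have hf2 : MemLp (fun x => ΛS (φ x, σ x)) 2 μ := by
    refine hg.of_le hf2m (ae_of_all _ fun x => ?_)
    rw [Real.norm_eq_abs, Real.norm_eq_abs, abs_of_nonneg (hgnn x)]
    exact hΛS (φ x) (σ x)
  have hf3 : MemLp (fun x => ΘS (φ x, σ x) * w x) 2 μ := by
    refine (hw.const_mul R₀).of_le (hf3m.mul hw.aestronglyMeasurable)
      (ae_of_all _ fun x => ?_)
    rw [Real.norm_eq_abs, Real.norm_eq_abs, abs_mul, abs_mul, abs_of_pos hR₀]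
    exact mul_le_mul_of_nonneg_right (hΘS (φ x) (σ x)) (abs_nonneg _)
  have hf4 : MemLp (fun x => Θφ (φ x, σ x) * w x) 2 μ := by
    refine (hw.const_mul R₀).of_le (hf4m.mul hw.aestronglyMeasurable)
      (ae_of_all _ fun x => ?_)
    rw [Real.norm_eq_abs, Real.norm_eq_abs, abs_mul, abs_mul, abs_of_pos hR₀]
    refine mul_le_mul_of_nonneg_right ?_ (abs_nonneg _)
    have h := hΘφ (φ x) (σ x)
    rw [abs_of_nonneg (le_trans hR₅.le h.1)]
    exact h.2
  have hB : MemLp (fun x => D * σ x + χ * (1 - φ x)) 2 μ := by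
    have h := (hσ.const_mul D).add (((memLp_const (1:ℝ)).sub hφ).const_mul χ)
    simpa [Pi.add_def] using h
  -- integrability of the full integrand
  have hI : Integrable (fun x => (Λφ (φ x, σ x) - Θφ (φ x, σ x) * w x) * w x -
      (ΛS (φ x, σ x) - ΘS (φ x, σ x) * w x) * (D * σ x + χ * (1 - φ x))) μ := by
    have h1 := my_mul_int (hf1.sub hf4) hw
    have h2 := my_mul_int (hf2.sub hf3) hB
    simpa [Pi.sub_apply, Pi.sub_def] using h1.sub h2
  -- integrability of the bound
  have hG : Integrable (fun x =>
      -(R₅ / 2) * (w x) ^ 2 + K₀ * (1 + (φ x) ^ 2 + (σ x) ^ 2)) μ := by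
    have h1 := hw.integrable_sq.const_mul (-(R₅ / 2))
    have h2 := (((integrable_const (1:ℝ)).add hφ.integrable_sq).add
      hσ.integrable_sq).const_mul K₀
    simpa [add_assoc, Pi.add_def] using h1.add h2
  -- pointwise comparison
  have hpt : ∀ x, (Λφ (φ x, σ x) - Θφ (φ x, σ x) * w x) * w x -
      (ΛS (φ x, σ x) - ΘS (φ x, σ x) * w x) * (D * σ x + χ * (1 - φ x)) ≤
      -(R₅ / 2) * (w x) ^ 2 + K₀ * (1 + (φ x) ^ 2 + (σ x) ^ 2) := by
    intro x
    exact my_pointwise R₀ R₅ D χ (Λφ (φ x, σ x)) (ΛS (φ x, σ x)) (ΘS (φ x, σ x))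
      (Θφ (φ x, σ x)) (φ x) (σ x) (w x) hR₀ hR₅ hχ0 hχ1
      (hΛφ (φ x) (σ x)) (hΛS (φ x) (σ x)) (hΘS (φ x) (σ x)) (hΘφ (φ x) (σ x)).1
  have hmono : (∫ x, ((Λφ (φ x, σ x) - Θφ (φ x, σ x) * w x) * w x -
      (ΛS (φ x, σ x) - ΘS (φ x, σ x) * w x) * (D * σ x + χ * (1 - φ x))) ∂μ) ≤
      ∫ x, (-(R₅ / 2) * (w x) ^ 2 + K₀ * (1 + (φ x) ^ 2 + (σ x) ^ 2)) ∂μ :=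
    integral_mono hI hG hpt
  -- compute the right integral
  have hGval : (∫ x, (-(R₅ / 2) * (w x) ^ 2 + K₀ * (1 + (φ x) ^ 2 + (σ x) ^ 2)) ∂μ) =
      -(R₅ / 2) * (∫ x, (w x) ^ 2 ∂μ) +
      K₀ * (m + (∫ x, (φ x) ^ 2 ∂μ) + ∫ x, (σ x) ^ 2 ∂μ) := by
    have i2 : Integrable (fun x => 1 + (φ x) ^ 2) μ := by
      simpa using (integrable_const (1:ℝ)).add hφ.integrable_sq
    have i1 : Integrable (fun x => 1 + (φ x) ^ 2 + (σ x) ^ 2) μ := by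
      simpa [Pi.add_def] using i2.add hσ.integrable_sq
    rw [integral_add (hw.integrable_sq.const_mul (-(R₅ / 2))) (i1.const_mul K₀),
      integral_const_mul, integral_const_mul,
      integral_add i2 hσ.integrable_sq,
      integral_add (integrable_const (1:ℝ)) hφ.integrable_sq, integral_const]
    simp [hmdef, measureReal_def]
  rw [hGval] at hmono
  refine le_trans hmono ?_
  have hA : 0 ≤ ∫ x, (φ x) ^ 2 ∂μ := integral_nonneg fun x => sq_nonneg _
  have hS : 0 ≤ ∫ x, (σ x) ^ 2 ∂μ := integral_nonneg fun x => sq_nonneg _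
  have hχ2 : 0 ≤ χ ^ 2 := sq_nonneg _
  set A := ∫ x, (φ x) ^ 2 ∂μ
  set S := ∫ x, (σ x) ^ 2 ∂μ
  clear_value A S
  clear_value K₀ m
  have step1 : K₀ * (m + A + S) ≤ K₀ * (1 + m) * (1 + A + S) := by
    nlinarith [mul_nonneg (mul_nonneg hK₀.le hm) hA, mul_nonneg (mul_nonneg hK₀.le hm) hS,
      mul_nonneg hK₀.le hA, mul_nonneg hK₀.le hS]
  have step2 : K₀ * (1 + m) * (1 + A + S) ≤ K₀ * (1 + m) * (1 + χ ^ 2) * (1 + A + S) := by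
    have h1AS : (0:ℝ) ≤ 1 + A + S := by linarith
    nlinarith [mul_nonneg (mul_nonneg (mul_nonneg hK₀.le (by linarith : (0:ℝ) ≤ 1 + m)) h1AS) hχ2]
  linarith
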